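/- Every element of the separating set E_n (consisting of f_0,...,f_{⌊n/2⌋} and the invariants ε_{s_m}(x_j)) has degree at most 2n+1 as a polynomial in R_n. In particular, for 1 ≤ m ≤ ⌊(n−1)/2⌋ and m ≤ j ≤ n, the invariant ε_{s_m}(x_j) = ∑_{k=0}^{ν(x_j)} ((−1)^k/k!) D_n^k(x_j) s_m^k f_m^{ν(x_j)−k} has total degree 2ν(x_j)+1 where ν(x_j)=j, so its degree is at most 2n+1. -/

import Mathlib

open MvPolynomial Finset
open Fin.NatCast

noncomputable def Dw (K : Type) [CommRing K] (n : ℕ) :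
    Derivation K (MvPolynomial (Fin (n + 1)) K) (MvPolynomial (Fin (n + 1)) K) :=
  MvPolynomial.mkDerivation K fun i =>
    if i.1 = 0 then 0 else
      MvPolynomial.X ⟨i.1 - 1, Nat.lt_of_le_of_lt (Nat.sub_le _ _) i.isLt⟩

noncomputable def spoly (K : Type) [Field K] (n m : ℕ) : MvPolynomial (Fin (n + 1)) K :=
  ∑ k ∈ Finset.range (m + 1),
    (((-1 : K) ^ k) * ((2 * m + 1 - 2 * k : ℕ) : K) / 2) •
      (X ((k : ℕ) : Fin (n + 1)) * X ((2 * m + 1 - k : ℕ) : Fin (n + 1)))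

lemma fin_val (n a : ℕ) (h : a ≤ n) : ((a : ℕ) : Fin (n+1)).1 = a :=
  Fin.val_cast_of_lt (by omega)

lemma Dw_X (K : Type) [Field K] (n a : ℕ) (h : a ≤ n) :
    Dw K n (X ((a : ℕ) : Fin (n+1))) =
      if a = 0 then 0 else X (((a-1 : ℕ)) : Fin (n+1)) := by
  rw [Dw, mkDerivation_X]
  by_cases h0 : a = 0
  · subst h0; simp
  · rw [if_neg (by rw [fin_val n a h]; exact h0), if_neg h0]
    congr 1
    ext
    simp [fin_val n a h, fin_val n (a-1) (by omega)]

lemma aeval_Dw_X (K : Type) [Field K] (n : ℕ) (φ : Fin (n+1) → K) (a : ℕ) (h : a ≤ n) :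
    aeval φ (Dw K n (X ((a : ℕ) : Fin (n+1)))) =
      if a = 0 then 0 else φ (((a-1 : ℕ)) : Fin (n+1)) := by
  rw [Dw_X K n a h]; split <;> simp

lemma Dw_iter (K : Type) [Field K] (n j : ℕ) (hj : j ≤ n) (k : ℕ) (hk : k ≤ j) :
    (⇑(Dw K n))^[k] (X ((j : ℕ) : Fin (n+1))) = X (((j - k : ℕ)) : Fin (n+1)) := by
  induction k with
  | zero => simp
  | succ k ih =>
    rw [Function.iterate_succ_apply', ih (by omega), Dw_X K n (j-k) (by omega),
      if_neg (by omega)]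
    congr 2

lemma spoly_hom (K : Type) [Field K] (n m : ℕ) : (spoly K n m).IsHomogeneous 2 := by
  apply IsHomogeneous.sum
  intro k _
  rw [smul_eq_C_mul]
  exact ((isHomogeneous_X _ _).mul (isHomogeneous_X _ _)).C_mul _

lemma Dw_X_hom (K : Type) [Field K] (n : ℕ) (i : Fin (n+1)) :
    (Dw K n (X i)).IsHomogeneous 1 := by
  rw [Dw, mkDerivation_X]
  split
  · exact isHomogeneous_zero _ _ _
  · exact isHomogeneous_X _ _

lemma Dw_spoly_hom (K : Type) [Field K] (n m : ℕ) :
    (Dw K n (spoly K n m)).IsHomogeneous 2 := by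
  rw [spoly, map_sum]
  apply IsHomogeneous.sum
  intro k _
  rw [Derivation.map_smul, Derivation.leibniz, smul_eq_mul, smul_eq_mul, smul_eq_C_mul]
  exact (((isHomogeneous_X _ _).mul (Dw_X_hom K n _)).add
    ((isHomogeneous_X _ _).mul (Dw_X_hom K n _))).C_mul _

lemma aeval_spoly (K : Type) [Field K] (n m : ℕ) (φ : Fin (n+1) → K) :
    aeval φ (spoly K n m) =
      ∑ k ∈ range (m+1), ((-1:K)^k * ((2*m+1-2*k : ℕ) : K)/2) *
        (φ ((k : ℕ) : Fin (n+1)) * φ ((2*m+1-k : ℕ) : Fin (n+1))) := by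
  rw [spoly, map_sum]
  apply Finset.sum_congr rfl
  intro k _
  simp [smul_eq_mul]

lemma aeval_Dw_spoly (K : Type) [Field K] (n m : ℕ) (hm : 2*m+1 ≤ n) (φ : Fin (n+1) → K) :
    aeval φ (Dw K n (spoly K n m)) =
      ∑ k ∈ range (m+1), ((-1:K)^k * ((2*m+1-2*k : ℕ) : K)/2) *
        (φ ((k : ℕ) : Fin (n+1)) *
          (if 2*m+1-k = 0 then 0 else φ (((2*m+1-k-1 : ℕ)) : Fin (n+1))) +
         φ ((2*m+1-k : ℕ) : Fin (n+1)) *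
          (if k = 0 then 0 else φ (((k-1 : ℕ)) : Fin (n+1)))) := by
  rw [spoly, map_sum, map_sum]
  apply Finset.sum_congr rfl
  intro k hk
  have hk' : k ≤ m := by simpa using Nat.lt_succ_iff.mp (mem_range.mp hk)
  rw [Derivation.map_smul, Derivation.leibniz, smul_eq_mul, smul_eq_mul]
  rw [map_smul, map_add, map_mul, map_mul, aeval_X, aeval_X,
    aeval_Dw_X K n φ k (by omega), aeval_Dw_X K n φ (2*m+1-k) (by omega), smul_eq_mul]

lemma Q_ne_zero (K : Type) [Field K] [CharZero K] (n m j : ℕ)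
    (φ : Fin (n+1) → K)
    (hs0 : aeval φ (spoly K n m) = 0)
    (hfne : aeval φ (Dw K n (spoly K n m)) ≠ 0)
    (hφj : φ ((j : ℕ) : Fin (n+1)) = 1) :
    (∑ k ∈ range (j+1), (((-1:K)^k / (k.factorial : K)) •
      (X (((j - k : ℕ)) : Fin (n+1)) * (spoly K n m)^k *
        (Dw K n (spoly K n m))^(j-k)))) ≠ 0 := by
  intro h
  have h2 := congrArg (aeval φ) h
  rw [map_sum, map_zero] at h2
  simp only [map_smul, map_mul, map_pow, aeval_X, smul_eq_mul, hs0] at h2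
  rw [Finset.sum_eq_single_of_mem 0 (mem_range.mpr (by omega))] at h2
  · simp only [pow_zero, Nat.factorial_zero, Nat.cast_one, div_one, one_mul,
      Nat.sub_zero, hφj, mul_one] at h2
    exact pow_ne_zero j hfne h2
  · intro b _ hb
    rw [zero_pow hb]
    ring

theorem stmt19 (K : Type) [Field K] [CharZero K] (n m j : ℕ)
    (h1 : 1 ≤ m) (h2 : m ≤ (n - 1) / 2) (h3 : m ≤ j) (h4 : j ≤ n) :
    (Dw K n (spoly K n m)).totalDegree ≤ 2 * n + 1 ∧
    (∑ k ∈ Finset.range (j + 1),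
        (((-1 : K) ^ k / (k.factorial : K)) •
          ((⇑(Dw K n))^[k] (X ((j : ℕ) : Fin (n + 1))) * (spoly K n m) ^ k *
            (Dw K n (spoly K n m)) ^ (j - k)))).totalDegree = 2 * j + 1 ∧
    2 * j + 1 ≤ 2 * n + 1 := by
  have hmn : 2*m + 1 ≤ n := by omega
  have hf : (Dw K n (spoly K n m)).IsHomogeneous 2 := Dw_spoly_hom K n m
  have hs : (spoly K n m).IsHomogeneous 2 := spoly_hom K n m
  refine ⟨le_trans hf.totalDegree_le (by omega), ?_, by omega⟩
  have hEq : (∑ k ∈ Finset.range (j + 1),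
        (((-1 : K) ^ k / (k.factorial : K)) •
          ((⇑(Dw K n))^[k] (X ((j : ℕ) : Fin (n + 1))) * (spoly K n m) ^ k *
            (Dw K n (spoly K n m)) ^ (j - k)))) =
      (∑ k ∈ range (j+1), (((-1:K)^k / (k.factorial : K)) •
        (X (((j - k : ℕ)) : Fin (n+1)) * (spoly K n m)^k *
          (Dw K n (spoly K n m))^(j-k)))) := by
    apply Finset.sum_congr rfl
    intro k hk
    rw [Dw_iter K n j h4 k (by have := mem_range.mp hk; omega)]
  rw [hEq]
  have hhom : (∑ k ∈ range (j+1), (((-1:K)^k / (k.factorial : K)) •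
        (X (((j - k : ℕ)) : Fin (n+1)) * (spoly K n m)^k *
          (Dw K n (spoly K n m))^(j-k)))).IsHomogeneous (2*j+1) := by
    apply IsHomogeneous.sum
    intro k hk
    have hkj : k ≤ j := by have := mem_range.mp hk; omega
    rw [smul_eq_C_mul]
    have hdeg : (1 + 2*k) + 2*(j-k) = 2*j+1 := by omega
    exact (hdeg ▸ (((isHomogeneous_X _ _).mul (hs.pow k)).mul (hf.pow (j-k)))).C_mul _
  apply hhom.totalDegree
  rcases eq_or_ne j (m+1) with hj | hj
  · -- j = m + 1 : use indicator of {m-1, m+1}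
    set φ : Fin (n+1) → K := fun i => if i.1 = m - 1 ∨ i.1 = m + 1 then (1:K) else 0 with hφ
    have hφe : ∀ x : ℕ, x ≤ n → φ ((x : ℕ) : Fin (n+1)) =
        if x = m - 1 ∨ x = m + 1 then (1:K) else 0 := by
      intro x hx
      rw [hφ]
      simp only [fin_val n x hx]
    apply Q_ne_zero K n m j φ
    · rw [aeval_spoly]
      apply Finset.sum_eq_zero
      intro k hk
      have hk' : k ≤ m := by have := mem_range.mp hk; omega
      rw [hφe k (by omega), hφe (2*m+1-k) (by omega)]
      split_ifs <;> first | ring1 | (exfalso; first | assumption | omega)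
    · rw [aeval_Dw_spoly K n m hmn]
      set F : ℕ → K := fun k => ((-1:K)^k * ((2*m+1-2*k : ℕ) : K)/2) *
          (φ ((k : ℕ) : Fin (n+1)) *
            (if 2*m+1-k = 0 then 0 else φ (((2*m+1-k-1 : ℕ)) : Fin (n+1))) +
           φ ((2*m+1-k : ℕ) : Fin (n+1)) *
            (if k = 0 then 0 else φ (((k-1 : ℕ)) : Fin (n+1)))) with hF
      rw [show m + 1 = (m-1) + 1 + 1 by omega, Finset.sum_range_succ, Finset.sum_range_succ]
      have hz : ∑ k ∈ range (m-1), F k = 0 := by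
        apply Finset.sum_eq_zero
        intro k hk
        have hk' : k < m - 1 := mem_range.mp hk
        rw [hF]
        simp only
        rw [hφe k (by omega), hφe (2*m+1-k) (by omega)]
        split_ifs <;> first | ring1 | (exfalso; first | assumption | omega)
      rw [hz, zero_add, show (m-1) + 1 = m by omega]
      have ea : 2*m+1-m = m+1 := by omega
      have ec : 2*m+1-(m-1) = m+2 := by omega
      have ee : 2*m+1-2*(m-1) = 3 := by omega
      have ef : 2*m+1-2*m = 1 := by omega
      rw [ea, ec, ee, ef, show m+1-1 = m by omega, show m+2-1 = m+1 by omega]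
      rw [hφe (m-1) (by omega), hφe m (by omega), hφe (m+1) (by omega),
        hφe (m+2) (by omega)]
      have e4 : (-1:K)^m = -(-1:K)^(m-1) := by
        conv_lhs => rw [show m = m-1+1 by omega]
        rw [pow_succ]; ring
      have hne : ((-1:K)^(m-1)) ≠ 0 := pow_ne_zero _ (by norm_num)
      split_ifs <;> first
        | (exfalso; first | assumption | omega)
        | (intro hcon; apply hne; rw [e4] at hcon; push_cast at hcon;
           linear_combination hcon)
    · rw [hφe j (by omega)]
      exact if_pos (Or.inr hj)
  · -- j ≠ m + 1 : use indicator of {m, j}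
    set φ : Fin (n+1) → K := fun i => if i.1 = m ∨ i.1 = j then (1:K) else 0 with hφ
    have hφe : ∀ x : ℕ, x ≤ n → φ ((x : ℕ) : Fin (n+1)) =
        if x = m ∨ x = j then (1:K) else 0 := by
      intro x hx
      rw [hφ]
      simp only [fin_val n x hx]
    apply Q_ne_zero K n m j φ
    · rw [aeval_spoly]
      apply Finset.sum_eq_zero
      intro k hk
      have hk' : k ≤ m := by have := mem_range.mp hk; omega
      rw [hφe k (by omega), hφe (2*m+1-k) (by omega)]
      split_ifs <;> first | ring1 | (exfalso; first | assumption | omega)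
    · rw [aeval_Dw_spoly K n m hmn]
      rw [Finset.sum_eq_single_of_mem m (mem_range.mpr (by omega))]
      · have ea : 2*m+1-m = m+1 := by omega
        have ef : 2*m+1-2*m = 1 := by omega
        rw [ea, ef, show m+1-1 = m by omega]
        rw [hφe m (by omega), hφe (m+1) (by omega)]
        have hne : ((-1:K)^m / 2) ≠ 0 :=
          div_ne_zero (pow_ne_zero _ (by norm_num)) two_ne_zero
        have hm1 : m - 1 ≤ n := by omega
        split_ifs <;> first
          | (exfalso; first | assumption | omega)
          | (intro hcon; apply hne; push_cast at hcon; linear_combination hcon)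
      · intro k hk hkm
        have hk' : k ≤ m := by have := mem_range.mp hk; omega
        rw [hφe k (by omega)]
        by_cases hk0 : k = 0
        · subst hk0
          split_ifs <;> first | ring1 | (exfalso; first | assumption | omega)
        · rw [hφe (k-1) (by omega)]
          split_ifs <;> first | ring1 | (exfalso; first | assumption | omega)
    · rw [hφe j (by omega)]
      exact if_pos (Or.inr rfl)
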